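/- arXiv:2309.11393 — 2 statements merged into one kernel-verified Lean document; each statement's English description precedes it below -/
import Mathlib

section
/- Consider the P consensus estimator y^k = w − x^k, x^{k+1} = x^k + L y^k with constant input w ∈ ℝ^n and initialization 𝟙ᵀx^0 = 0, where the Laplacian L satisfies L𝟙 = 0 and 𝟙ᵀL = 0, the eigenvalue 1 of I − L has algebraic multiplicity one, and every other eigenvalue of I − L has modulus strictly less than 1. Then the estimator has zero steady-state error: for every agent i, y_i^k → (1/n)∑_{j=1}^n w_j as k → ∞. -/
open Matrix BigOperators Filter Topology Polynomial
open scoped ENNReal NNReal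

lemma aux_toLinAlgEquiv'_apply {n : ℕ} (A : Matrix (Fin n) (Fin n) ℂ) (v : Fin n → ℂ) :
    Matrix.toLinAlgEquiv' A v = A *ᵥ v := rfl

lemma aux_spec_iff {n : ℕ} (A : Matrix (Fin n) (Fin n) ℂ) (μ : ℂ) :
    μ ∈ spectrum ℂ A ↔ ∃ v, v ≠ 0 ∧ A *ᵥ v = μ • v := by
  rw [← AlgEquiv.spectrum_eq (Matrix.toLinAlgEquiv' : Matrix (Fin n) (Fin n) ℂ ≃ₐ[ℂ] _) A,
    ← Module.End.hasEigenvalue_iff_mem_spectrum]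
  constructor
  · intro h
    obtain ⟨v, hv⟩ := h.exists_hasEigenvector
    refine ⟨v, hv.2, ?_⟩
    rw [← aux_toLinAlgEquiv'_apply]
    exact Module.End.mem_eigenspace_iff.mp hv.1
  · rintro ⟨v, hv0, hv⟩
    exact Module.End.hasEigenvalue_of_hasEigenvector
      ⟨Module.End.mem_eigenspace_iff.mpr ((aux_toLinAlgEquiv'_apply A v).trans hv), hv0⟩

attribute [local instance] Matrix.linftyOpNormedRing Matrix.linftyOpNormedAlgebra

lemma aux_complete (n : ℕ) : CompleteSpace (Matrix (Fin n) (Fin n) ℂ) :=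
  FiniteDimensional.complete ℂ _

attribute [local instance] aux_complete

lemma aux_pow_tendsto {n : ℕ} (A : Matrix (Fin n) (Fin n) ℂ)
    (h : ∀ μ ∈ spectrum ℂ A, ‖μ‖ < 1) :
    Tendsto (fun k => A ^ k) atTop (𝓝 0) := by
  have hρ : spectralRadius ℂ A < 1 := by
    rcases Set.eq_empty_or_nonempty (spectrum ℂ A) with he | hne
    · rw [spectralRadius, he]
      simpa using ENNReal.zero_lt_one
    · obtain ⟨z, hz, hzr⟩ := spectrum.exists_nnnorm_eq_spectralRadius_of_nonempty hne
      rw [← hzr]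
      have : ‖z‖₊ < 1 := by
        rw [← NNReal.coe_lt_coe]
        simpa using h z hz
      exact_mod_cast this
  obtain ⟨c, hc1, hc2⟩ := exists_between hρ
  have hcne : c ≠ ⊤ := (hc2.trans ENNReal.one_lt_top).ne
  have hG := spectrum.pow_nnnorm_pow_one_div_tendsto_nhds_spectralRadius A
  have hev : ∀ᶠ (k : ℕ) in atTop, (‖A ^ k‖₊ : ℝ≥0∞) ^ (1 / (k : ℝ)) < c :=
    hG.eventually_lt_const hc1
  have key : ∀ᶠ k in atTop, ‖A ^ k‖ ≤ c.toReal ^ k := by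
    filter_upwards [hev, eventually_ge_atTop 1] with k hk hk1
    have hkpos : (0:ℝ) < k := by exact_mod_cast hk1
    have h2 : ((‖A ^ k‖₊ : ℝ≥0∞) ^ (1 / (k : ℝ))) ^ (k : ℝ) < c ^ (k : ℝ) := by
      exact ENNReal.rpow_lt_rpow hk hkpos
    rw [← ENNReal.rpow_mul, one_div, inv_mul_cancel₀ hkpos.ne', ENNReal.rpow_one] at h2
    have h3 : (‖A ^ k‖₊ : ℝ≥0∞) ≤ c ^ (k : ℝ) := h2.le
    calc ‖A ^ k‖ = ((‖A ^ k‖₊ : ℝ≥0∞)).toReal := by simp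
      _ ≤ (c ^ (k:ℝ)).toReal :=
          ENNReal.toReal_mono (ENNReal.rpow_ne_top_of_nonneg hkpos.le hcne) h3
      _ = c.toReal ^ (k:ℝ) := by rw [← ENNReal.toReal_rpow]
      _ = c.toReal ^ k := Real.rpow_natCast _ k
  have hlim : Tendsto (fun k : ℕ => c.toReal ^ k) atTop (𝓝 0) := by
    apply tendsto_pow_atTop_nhds_zero_of_lt_one ENNReal.toReal_nonneg
    have := ENNReal.toReal_lt_toReal hcne ENNReal.one_ne_top |>.mpr hc2
    simpa using this
  have := squeeze_zero_norm' key hlim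
  exact this

lemma aux_charpoly_shift {n : ℕ} (A : Matrix (Fin n) (Fin n) ℂ) :
    (A - 1).charpoly = A.charpoly.comp (X + 1) := by
  have hmap : (A - 1).charmatrix = (charmatrix A).map (aeval (X + 1 : ℂ[X])).toRingHom := by
    ext i j
    by_cases h : i = j
    · subst h
      simp [Matrix.sub_apply, Matrix.one_apply_eq, Polynomial.aeval_X, map_sub,
        Polynomial.aeval_C, Polynomial.algebraMap_eq]
      ring
    · simp [charmatrix_apply_ne _ _ _ h, Matrix.sub_apply, Matrix.one_apply_ne h,
        Polynomial.aeval_C, Polynomial.algebraMap_eq]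
  have hcomp : ∀ p : ℂ[X], (aeval (X + 1 : ℂ[X])).toRingHom p = p.comp (X + 1) := by
    intro p
    simp [Polynomial.aeval_def, Polynomial.eval₂_eq_eval_map, Polynomial.comp]
  rw [Matrix.charpoly, hmap, ← RingHom.mapMatrix_apply, ← RingHom.map_det, hcomp, Matrix.charpoly]

lemma aux_two_le_mult {n : ℕ} (A : Matrix (Fin n) (Fin n) ℂ) (u v : Fin n → ℂ)
    (hu : A *ᵥ u = u) (hv : A *ᵥ v = v) (hind : LinearIndependent ℂ ![u, v]) :
    2 ≤ A.charpoly.rootMultiplicity 1 := by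
  classical
  set φ : Module.End ℂ (Fin n → ℂ) := Matrix.toLinAlgEquiv' (A - 1) with hφ
  have hker : ∀ z : Fin n → ℂ, A *ᵥ z = z → φ z = 0 := by
    intro z hz
    show (A - 1) *ᵥ z = 0
    rw [Matrix.sub_mulVec, Matrix.one_mulVec, hz, sub_self]
  have hu' : (⟨u, hker u hu⟩ : LinearMap.ker φ) = (⟨u, hker u hu⟩ : LinearMap.ker φ) := rfl
  -- two independent elements in ker φ
  have h2 : 2 ≤ Module.finrank ℂ (LinearMap.ker φ) := by
    have hw : LinearIndependent ℂ
        (![⟨u, hker u hu⟩, ⟨v, hker v hv⟩] : Fin 2 → LinearMap.ker φ) := by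
      apply LinearIndependent.of_comp (LinearMap.ker φ).subtype
      have : ((LinearMap.ker φ).subtype ∘ ![⟨u, hker u hu⟩, ⟨v, hker v hv⟩]) = ![u, v] := by
        ext i j
        fin_cases i <;> rfl
      rw [this]
      exact hind
    simpa using hw.fintype_card_le_finrank
  have hker_le : LinearMap.ker φ ≤ φ.maxGenEigenspace 0 := by
    intro z hz
    rw [Module.End.mem_maxGenEigenspace]
    exact ⟨1, by simpa using hz⟩
  have h3 : 2 ≤ Module.finrank ℂ (φ.maxGenEigenspace 0) :=
    le_trans h2 (Submodule.finrank_mono hker_le)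
  have h4 : 2 ≤ natTrailingDegree φ.charpoly := by
    rwa [LinearMap.finrank_maxGenEigenspace_zero_eq] at h3
  have hchar : φ.charpoly = (A - 1).charpoly := by
    rw [← LinearMap.charpoly_toMatrix φ (Pi.basisFun ℂ (Fin n)),
      LinearMap.toMatrix_eq_toMatrix']
    congr 1
    exact LinearMap.toMatrixAlgEquiv'_toLinAlgEquiv' (A - 1)
  rw [hchar, aux_charpoly_shift] at h4
  have h5 : (X : ℂ[X]) ^ 2 ∣ A.charpoly.comp (X + 1) := by
    rw [Polynomial.X_pow_dvd_iff]
    intro d hd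
    exact Polynomial.coeff_eq_zero_of_lt_natTrailingDegree (lt_of_lt_of_le hd h4)
  have h6 : ((X : ℂ[X]) - C 1) ^ 2 ∣ A.charpoly := by
    obtain ⟨t, ht⟩ := h5
    have := congrArg (fun p : ℂ[X] => p.comp (X - 1)) ht
    simp only [Polynomial.mul_comp, Polynomial.pow_comp, Polynomial.X_comp,
      Polynomial.comp_assoc, Polynomial.add_comp, Polynomial.one_comp] at this
    rw [sub_add_cancel, Polynomial.comp_X] at this
    refine ⟨t.comp (X - 1), ?_⟩
    simpa [_root_.map_one] using this
  have hne : A.charpoly ≠ 0 := (Matrix.charpoly_monic A).ne_zero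
  rw [Polynomial.le_rootMultiplicity_iff hne]
  exact h6

/-- The P consensus estimator `y k = w - x k`,
`x (k+1) = x k + L *ᵥ y k` with constant input `w`, initialization
`∑ i, x 0 i = 0` (i.e. `𝟙ᵀ x⁰ = 0`), where the Laplacian satisfies `L𝟙 = 0`
and `𝟙ᵀL = 0`, the eigenvalue `1` of `I - L` has algebraic multiplicity one,
and every other complex eigenvalue of `I - L` has modulus strictly less than
`1`, has zero steady-state error: each output `y k i` converges to the average
`(1/n) * ∑ j, w j` of the inputs. -/
theorem P_estimator_zero_steady_state_error
    (n : ℕ) (L : Matrix (Fin n) (Fin n) ℝ)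
    (hrow : L *ᵥ (fun _ => (1 : ℝ)) = 0)
    (hcol : (fun _ => (1 : ℝ)) ᵥ* L = 0)
    (hmult : ((((1 : Matrix (Fin n) (Fin n) ℝ) - L).map
        (algebraMap ℝ ℂ)).charpoly).rootMultiplicity 1 = 1)
    (hspec : ∀ μ ∈ spectrum ℂ (((1 : Matrix (Fin n) (Fin n) ℝ) - L).map
        (algebraMap ℝ ℂ)), μ ≠ 1 → ‖μ‖ < 1)
    (w : Fin n → ℝ) (x y : ℕ → Fin n → ℝ)
    (hy : ∀ k, y k = w - x k)
    (hx : ∀ k, x (k + 1) = x k + L *ᵥ y k)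
    (hx0 : ∑ i, x 0 i = 0) :
    ∀ i, Tendsto (fun k => y k i) atTop (𝓝 ((1 / (n : ℝ)) * ∑ j, w j)) := by
  intro i
  rcases Nat.eq_zero_or_pos n with hn | hn
  · subst hn; exact i.elim0
  have hnR : (n : ℝ) ≠ 0 := Nat.cast_ne_zero.mpr hn.ne'
  have hnC : (n : ℂ) ≠ 0 := Nat.cast_ne_zero.mpr hn.ne'
  set a : ℝ := (1 / (n : ℝ)) * ∑ j, w j with ha
  set M : Matrix (Fin n) (Fin n) ℝ := 1 - L with hMdef
  -- recurrence for y
  have hyrec : ∀ k, y (k + 1) = M *ᵥ y k := by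
    intro k
    rw [hy (k + 1), hx k, hMdef, Matrix.sub_mulVec, Matrix.one_mulVec, hy k]
    abel
  -- M fixes constant vectors
  have hMone : M *ᵥ (fun _ => (1 : ℝ)) = fun _ => (1 : ℝ) := by
    rw [hMdef, Matrix.sub_mulVec, Matrix.one_mulVec, hrow, sub_zero]
  have hMa : M *ᵥ (fun _ => a) = fun _ => a := by
    have : (fun _ : Fin n => a) = a • (fun _ : Fin n => (1 : ℝ)) := by
      funext j; simp
    rw [this, Matrix.mulVec_smul, hMone]
  -- z and its dynamics
  set z : ℕ → Fin n → ℝ := fun k j => y k j - a with hzdef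
  have hzrec : ∀ k, z k = M ^ k *ᵥ z 0 := by
    intro k
    induction k with
    | zero => simp [Matrix.one_mulVec, pow_zero]
    | succ k ih =>
      have : z (k + 1) = M *ᵥ z k := by
        funext j
        have h1 : z (k + 1) = fun j => (M *ᵥ y k) j - a := by
          funext j'; rw [hzdef]; simp [hyrec k]
        rw [h1]
        have h2 : (fun j => (M *ᵥ y k) j - a) = M *ᵥ y k - M *ᵥ (fun _ => a) := by
          rw [hMa]; rfl
        rw [h2, ← Matrix.mulVec_sub]
        rfl
      rw [this, ih, Matrix.mulVec_mulVec, ← pow_succ']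
  -- sum of z 0 vanishes
  have hz0 : ∑ j, z 0 j = 0 := by
    have hy0 : ∑ j, y 0 j = ∑ j, w j := by
      rw [hy 0]
      simp [Finset.sum_sub_distrib, hx0]
    have : ∑ j, z 0 j = (∑ j, y 0 j) - n * a := by
      rw [hzdef]
      simp [Finset.sum_sub_distrib, mul_comm]
    rw [this, hy0, ha]
    field_simp
    ring
  -- complexification
  set f : ℝ →+* ℂ := (algebraMap ℝ ℂ) with hf
  set Mc : Matrix (Fin n) (Fin n) ℂ := M.map f with hMc
  set v0 : Fin n → ℂ := fun j => ((z 0 j : ℝ) : ℂ) with hv0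
  have hpowmap : ∀ k : ℕ, (M ^ k).map f = Mc ^ k := by
    intro k
    rw [← RingHom.mapMatrix_apply, map_pow, RingHom.mapMatrix_apply, ← hMc]
  have hcast : ∀ k j, ((z k j : ℝ) : ℂ) = ((Mc ^ k) *ᵥ v0) j := by
    intro k j
    rw [hzrec k]
    have := RingHom.map_mulVec f (M ^ k) (z 0) j
    rw [hpowmap k] at this
    exact this
  -- row and column sums of Mc are 1
  have hrowM : ∀ i0, ∑ j, Mc i0 j = 1 := by
    intro i0
    have h1 : (M *ᵥ (fun _ => (1:ℝ))) i0 = 1 := by rw [hMone]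
    have h2 : ∑ j, M i0 j = 1 := by
      simpa [Matrix.mulVec, dotProduct] using h1
    have := congrArg (f : ℝ → ℂ) h2
    simpa [hMc, Matrix.map_apply, map_sum] using this
  have hcolM : ∀ j0, ∑ i0, Mc i0 j0 = 1 := by
    intro j0
    have h1 : ((fun _ => (1:ℝ)) ᵥ* M) j0 = 1 := by
      rw [hMdef, Matrix.vecMul_sub, Matrix.vecMul_one, hcol, Pi.sub_apply]
      simp
    have h2 : ∑ i0, M i0 j0 = 1 := by
      simpa [Matrix.vecMul, dotProduct] using h1
    have := congrArg (f : ℝ → ℂ) h2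
    simpa [hMc, Matrix.map_apply, map_sum] using this
  -- averaging matrix J
  set J : Matrix (Fin n) (Fin n) ℂ := Matrix.of (fun _ _ => (n : ℂ)⁻¹) with hJ
  have hMJ : Mc * J = J := by
    ext i0 j0
    simp only [Matrix.mul_apply, hJ, Matrix.of_apply]
    rw [← Finset.sum_mul, hrowM i0, one_mul]
  have hJM : J * Mc = J := by
    ext i0 j0
    simp only [Matrix.mul_apply, hJ, Matrix.of_apply]
    rw [← Finset.mul_sum, hcolM j0, mul_one]
  have hJJ : J * J = J := by
    ext i0 j0
    simp only [Matrix.mul_apply, hJ, Matrix.of_apply, Finset.sum_const, Finset.card_univ,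
      Fintype.card_fin, nsmul_eq_mul]
    field_simp
  set N : Matrix (Fin n) (Fin n) ℂ := Mc - J with hN
  have hMkJ : ∀ k : ℕ, Mc ^ k * J = J := by
    intro k
    induction k with
    | zero => simp
    | succ k ih => rw [pow_succ, mul_assoc, hMJ, ih]
  have hNk : ∀ k : ℕ, 1 ≤ k → N ^ k = Mc ^ k - J := by
    intro k hk
    induction k with
    | zero => omega
    | succ k ih =>
      rcases Nat.eq_zero_or_pos k with h0 | hpos
      · subst h0; simp [hN]
      · rw [pow_succ, ih hpos, hN, sub_mul, mul_sub, mul_sub, hMkJ, hJM, hJJ, ← pow_succ]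
        abel
  -- J kills v0
  have hsumv0 : ∑ j, v0 j = 0 := by
    rw [hv0]
    push_cast [← hz0]
    norm_cast
  have hJv : J *ᵥ v0 = 0 := by
    funext j0
    simp only [Matrix.mulVec, dotProduct, hJ, Matrix.of_apply, Pi.zero_apply]
    rw [← Finset.mul_sum, hsumv0, mul_zero]
  -- spectrum of N is inside the open unit disc
  have hspecN : ∀ μ ∈ spectrum ℂ N, ‖μ‖ < 1 := by
    intro μ hμ
    obtain ⟨v, hvne, hNv⟩ := (aux_spec_iff N μ).mp hμ
    by_cases hμ0 : μ = 0
    · subst hμ0; simpa using one_pos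
    -- sum of entries of v
    set s : ℂ := ∑ j, v j with hs
    have hsumMc : ∑ i0, (Mc *ᵥ v) i0 = s := by
      simp only [Matrix.mulVec, dotProduct]
      rw [Finset.sum_comm]
      rw [hs]
      congr 1
      funext j0
      rw [← Finset.sum_mul, hcolM j0, one_mul]
    have hsumJ : ∑ i0, (J *ᵥ v) i0 = s := by
      simp only [Matrix.mulVec, dotProduct, hJ, Matrix.of_apply]
      rw [← Finset.mul_sum, ← hs, Finset.sum_const, Finset.card_univ, Fintype.card_fin,
        nsmul_eq_mul]
      field_simp
    have hsum0 : μ * s = 0 := by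
      have h1 : ∑ i0, (N *ᵥ v) i0 = 0 := by
        rw [hN, Matrix.sub_mulVec]
        simp only [Pi.sub_apply, Finset.sum_sub_distrib, hsumMc, hsumJ, sub_self]
      have h2 : ∑ i0, (N *ᵥ v) i0 = μ * s := by
        rw [hNv, hs, Finset.mul_sum]
        simp [smul_eq_mul]
      rw [← h2, h1]
    have hs0 : s = 0 := by
      rcases mul_eq_zero.mp hsum0 with h | h
      · exact absurd h hμ0
      · exact h
    have hJv2 : J *ᵥ v = 0 := by
      funext j0
      simp only [Matrix.mulVec, dotProduct, hJ, Matrix.of_apply, Pi.zero_apply]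
      rw [← Finset.mul_sum, ← hs, hs0, mul_zero]
    have hMcv : Mc *ᵥ v = μ • v := by
      have : N *ᵥ v = Mc *ᵥ v - J *ᵥ v := by rw [hN, Matrix.sub_mulVec]
      rw [this, hJv2, sub_zero] at hNv
      exact hNv
    have hμspec : μ ∈ spectrum ℂ Mc := (aux_spec_iff Mc μ).mpr ⟨v, hvne, hMcv⟩
    by_cases hμ1 : μ = 1
    · exfalso
      subst hμ1
      have hone : Mc *ᵥ (fun _ => (1:ℂ)) = fun _ => (1:ℂ) := by
        funext i0
        simp only [Matrix.mulVec, dotProduct, mul_one]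
        exact hrowM i0
      have hvv : Mc *ᵥ v = v := by rw [hMcv, one_smul]
      have hind : LinearIndependent ℂ ![(fun _ => (1:ℂ) : Fin n → ℂ), v] := by
        rw [LinearIndependent.pair_iff]
        intro c d hcd
        have hsum : c * n + d * s = 0 := by
          have := congrArg (fun g : Fin n → ℂ => ∑ j, g j) hcd
          simpa [Finset.sum_add_distrib, ← Finset.mul_sum, ← hs, mul_comm] using this
        rw [hs0, mul_zero, add_zero] at hsum
        have hc : c = 0 := by
          rcases mul_eq_zero.mp hsum with h | h
          · exact h
          · exact absurd h hnC
        subst hc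
        refine ⟨rfl, ?_⟩
        have : d • v = 0 := by simpa using hcd
        rcases smul_eq_zero.mp this with h | h
        · exact h
        · exact absurd h hvne
      have := aux_two_le_mult Mc (fun _ => (1:ℂ)) v hone hvv hind
      rw [hmult] at this
      omega
    · exact hspec μ hμspec hμ1
  -- convergence
  have hNpow : Tendsto (fun k => N ^ k) atTop (𝓝 0) := aux_pow_tendsto N hspecN
  have hnormN : Tendsto (fun k => ‖N ^ k‖) atTop (𝓝 0) :=
    tendsto_zero_iff_norm_tendsto_zero.mp hNpow
  have hentry : Tendsto (fun k => ((N ^ k) *ᵥ v0) i) atTop (𝓝 0) := by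
    refine squeeze_zero_norm (fun k => ?_) (by simpa using hnormN.mul_const ‖v0‖)
    calc ‖((N ^ k) *ᵥ v0) i‖ ≤ ‖(N ^ k) *ᵥ v0‖ := norm_le_pi_norm _ i
      _ ≤ ‖N ^ k‖ * ‖v0‖ := Matrix.linfty_opNorm_mulVec _ _
  have hMc_entry : Tendsto (fun k => ((Mc ^ k) *ᵥ v0) i) atTop (𝓝 0) := by
    apply hentry.congr'
    filter_upwards [eventually_ge_atTop 1] with k hk
    rw [hNk k hk, Matrix.sub_mulVec, hJv]
    simp
  have hz_tendsto : Tendsto (fun k => z k i) atTop (𝓝 0) := by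
    have hre : Tendsto (fun k => ((Mc ^ k *ᵥ v0) i).re) atTop (𝓝 0) := by
      have := (Complex.continuous_re.tendsto 0).comp hMc_entry
      simpa [Function.comp_def] using this
    apply hre.congr
    intro k
    rw [← hcast k i]
    simp
  have hfinal : Tendsto (fun k => z k i + a) atTop (𝓝 (0 + a)) := hz_tendsto.add_const a
  rw [zero_add] at hfinal
  apply hfinal.congr
  intro k
  simp [hzdef]
end

section
/- Consider two P consensus estimators connected in series: ξ^{k+1} = ξ^k + L p^k with p^k = w^k − ξ^k, followed by x^{k+1} = x^k + L y^k with y^k = p^k − x^k, where 𝟙ᵀξ^0 = 0 and 𝟙ᵀx^0 = 0. Assume the Laplacian L satisfies L𝟙 = 0 and 𝟙ᵀL = 0, the eigenvalue 1 of I − L has algebraic multiplicity one, and every other eigenvalue of I − L has modulus strictly less than 1. If the input is affine in k, i.e., w^k = a + k b for fixed vectors a, b ∈ ℝ^n, then the cascaded estimator asymptotically tracks the average: y^k − ((1/n)∑_{i=1}^n w_i^k)𝟙 → 0 as k → ∞. -/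
open Matrix BigOperators Filter Topology Polynomial

section Helpers

/-- Eigenvector for eigenvalue `μ` means `μ` is in the matrix spectrum. -/
private lemma mem_spectrum_of_eigen {ι : Type*} [Fintype ι] [DecidableEq ι]
    (A : Matrix ι ι ℂ) {μ : ℂ} {v : ι → ℂ} (hv : v ≠ 0) (h : A *ᵥ v = μ • v) :
    μ ∈ spectrum ℂ A := by
  rw [spectrum.mem_iff]
  intro hunit
  rw [Matrix.isUnit_iff_isUnit_det] at hunit
  have hdet : (algebraMap ℂ (Matrix ι ι ℂ) μ - A).det = 0 := by
    rw [← Matrix.exists_mulVec_eq_zero_iff]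
    refine ⟨v, hv, ?_⟩
    rw [Matrix.sub_mulVec, Algebra.algebraMap_eq_smul_one, Matrix.smul_mulVec,
      Matrix.one_mulVec, h, sub_self]
  rw [hdet] at hunit
  simp at hunit

private lemma exists_eigen_of_mem_spectrum {ι : Type*} [Fintype ι] [DecidableEq ι]
    {A : Matrix ι ι ℂ} {μ : ℂ} (h : μ ∈ spectrum ℂ A) :
    ∃ v : ι → ℂ, v ≠ 0 ∧ A *ᵥ v = μ • v := by
  rw [spectrum.mem_iff, Matrix.isUnit_iff_isUnit_det, isUnit_iff_ne_zero, ne_eq,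
    not_not, ← Matrix.exists_mulVec_eq_zero_iff] at h
  obtain ⟨v, hv, hveq⟩ := h
  refine ⟨v, hv, ?_⟩
  rw [Matrix.sub_mulVec, Algebra.algebraMap_eq_smul_one, Matrix.smul_mulVec,
    Matrix.one_mulVec, sub_eq_zero] at hveq
  exact hveq.symm

/-- Two linearly independent fixed vectors force `(X - 1)^2` to divide the char. polynomial. -/
private lemma sq_dvd_charpoly {n : ℕ} (A : Matrix (Fin n) (Fin n) ℂ) (v w : Fin n → ℂ)
    (hv : A *ᵥ v = v) (hw : A *ᵥ w = w) (hind : LinearIndependent ℂ ![v, w]) :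
    (X - C 1) ^ 2 ∣ A.charpoly := by
  classical
  set f : (Fin n → ℂ) →ₗ[ℂ] (Fin n → ℂ) := Matrix.toLin' A with hf
  have hs : LinearIndepOn ℂ id (Set.range ![v, w]) :=
    hind.linearIndepOn_id
  let b := Module.Basis.extend hs
  haveI : Fintype ↥(hs.extend (Set.subset_univ _)) := FiniteDimensional.fintypeBasisIndex b
  have hvmem : v ∈ hs.extend (Set.subset_univ _) :=
    hs.subset_extend _ ⟨0, by simp⟩
  have hwmem : w ∈ hs.extend (Set.subset_univ _) :=
    hs.subset_extend _ ⟨1, by simp⟩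
  set j0 : ↥(hs.extend (Set.subset_univ _)) := ⟨v, hvmem⟩ with hj0
  set j1 : ↥(hs.extend (Set.subset_univ _)) := ⟨w, hwmem⟩ with hj1
  have hvw : v ≠ w := by
    intro hvw
    have := hind.injective (by simp [hvw] : ![v,w] 0 = ![v,w] 1)
    simp at this
  have hj : j0 ≠ j1 := fun hc => hvw (congrArg Subtype.val hc)
  set M := LinearMap.toMatrix b b f with hM
  have hcol0 : ∀ i, M i j0 = if i = j0 then 1 else 0 := by
    intro i
    rw [hM, LinearMap.toMatrix_apply]
    have hb0 : b j0 = v := Module.Basis.extend_apply_self hs j0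
    rw [hb0]
    have hfv : f v = v := by rw [hf]; simpa [Matrix.toLin'_apply] using hv
    have hrep : b.repr v = Finsupp.single j0 1 := by
      have h := b.repr_self j0
      rwa [hb0] at h
    rw [hfv, hrep]
    simp [Finsupp.single_apply, eq_comm]
  have hcol1 : ∀ i, M i j1 = if i = j1 then 1 else 0 := by
    intro i
    rw [hM, LinearMap.toMatrix_apply]
    have hb1 : b j1 = w := Module.Basis.extend_apply_self hs j1
    rw [hb1]
    have hfw : f w = w := by rw [hf]; simpa [Matrix.toLin'_apply] using hw
    have hrep : b.repr w = Finsupp.single j1 1 := by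
      have h := b.repr_self j1
      rwa [hb1] at h
    rw [hfw, hrep]
    simp [Finsupp.single_apply, eq_comm]
  have hch : A.charpoly = M.charpoly := by
    rw [hM, LinearMap.charpoly_toMatrix]
    have hA : LinearMap.toMatrix (Pi.basisFun ℂ (Fin n)) (Pi.basisFun ℂ (Fin n)) f = A := by
      rw [LinearMap.toMatrix_eq_toMatrix', hf]
      exact LinearMap.toMatrix'_toLin' A
    conv_lhs => rw [← hA]
    rw [LinearMap.charpoly_toMatrix]
  rw [hch]
  set D := M.charmatrix with hD
  have hDcol0 : (fun i => D i j0) = (X - C (1:ℂ)) • fun i' => if i' = j0 then (1:ℂ[X]) else 0 := by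
    funext i
    show D i j0 = ((X - C (1:ℂ)) • fun i' => if i' = j0 then (1:ℂ[X]) else 0) i
    rw [hD, Matrix.charmatrix_apply, hcol0 i]
    by_cases h : i = j0 <;> simp [h, Matrix.diagonal_apply]
  have hDcol1 : (fun i => D i j1) = (X - C (1:ℂ)) • fun i' => if i' = j1 then (1:ℂ[X]) else 0 := by
    funext i
    show D i j1 = ((X - C (1:ℂ)) • fun i' => if i' = j1 then (1:ℂ[X]) else 0) i
    rw [hD, Matrix.charmatrix_apply, hcol1 i]
    by_cases h : i = j1 <;> simp [h, Matrix.diagonal_apply]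
  have hfac : M.charpoly = (X - C 1) ^ 2 *
      ((D.updateCol j0 (fun i' => if i' = j0 then (1:ℂ[X]) else 0)).updateCol j1
        (fun i' => if i' = j1 then (1:ℂ[X]) else 0)).det := by
    have e0 : D = D.updateCol j0 ((X - C (1:ℂ)) • fun i' => if i' = j0 then (1:ℂ[X]) else 0) := by
      conv_lhs => rw [← D.updateCol_eq_self j0]
      rw [hDcol0]
    have e1 : (D.updateCol j0 (fun i' => if i' = j0 then (1:ℂ[X]) else 0)) =
        (D.updateCol j0 (fun i' => if i' = j0 then (1:ℂ[X]) else 0)).updateCol j1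
          ((X - C (1:ℂ)) • fun i' => if i' = j1 then (1:ℂ[X]) else 0) := by
      have hcol1' : (fun i => (D.updateCol j0 (fun i' => if i' = j0 then (1:ℂ[X]) else 0)) i j1)
          = (X - C (1:ℂ)) • fun i' => if i' = j1 then (1:ℂ[X]) else 0 := by
        funext i
        rw [Matrix.updateCol_apply, if_neg hj.symm]
        exact congrFun hDcol1 i
      conv_lhs => rw [← (D.updateCol j0
        (fun i' => if i' = j0 then (1:ℂ[X]) else 0)).updateCol_eq_self j1]
      rw [hcol1']
    calc M.charpoly = D.det := rfl
      _ = (X - C 1) * (D.updateCol j0 (fun i' => if i' = j0 then (1:ℂ[X]) else 0)).det := by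
          conv_lhs => rw [e0]
          exact Matrix.det_updateCol_smul D j0 _ _
      _ = (X - C 1) * ((X - C 1) *
          ((D.updateCol j0 (fun i' => if i' = j0 then (1:ℂ[X]) else 0)).updateCol j1
            (fun i' => if i' = j1 then (1:ℂ[X]) else 0)).det) := by
          rw [congrArg Matrix.det e1, Matrix.det_updateCol_smul]
      _ = _ := by ring
  exact ⟨_, hfac⟩

end Helpers

section Analysis

attribute [local instance] Matrix.linftyOpNormedRing Matrix.linftyOpNormedAlgebra

private lemma entry_nnnorm_le {ι : Type*} [Fintype ι] [DecidableEq ι] (A : Matrix ι ι ℂ) (i j : ι) :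
    ‖A i j‖₊ ≤ ‖A‖₊ := by
  rw [Matrix.linfty_opNNNorm_def]
  refine le_trans (Finset.single_le_sum (f := fun j => ‖A i j‖₊) (fun _ _ => zero_le)
    (Finset.mem_univ j)) ?_
  exact Finset.le_sup (f := fun i => ∑ j, ‖A i j‖₊) (Finset.mem_univ i)

private lemma pow_entry_tendsto_zero {ι : Type*} [Fintype ι] [DecidableEq ι] [Nonempty ι]
    (A : Matrix ι ι ℂ)
    (h : ∀ μ ∈ spectrum ℂ A, ‖μ‖ < 1) (i j : ι) :
    Tendsto (fun k => (A ^ k) i j) atTop (𝓝 0) := by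
  haveI : CompleteSpace (Matrix ι ι ℂ) := FiniteDimensional.complete ℂ _
  have hrad : spectralRadius ℂ A < 1 := by
    have := spectrum.spectralRadius_lt_of_forall_lt (a := A) (r := 1)
      (fun z hz => by
        have := h z hz
        rw [← NNReal.coe_lt_coe]
        simpa [Complex.norm_def] using this)
    simpa using this
  have hG := spectrum.pow_nnnorm_pow_one_div_tendsto_nhds_spectralRadius A
  obtain ⟨ρ, hρ1, hρ2⟩ := exists_between hrad
  have hev : ∀ᶠ k : ℕ in atTop, (‖A ^ k‖₊ : ENNReal) ^ (1 / (k:ℝ)) < ρ :=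
    hG.eventually_lt_const hρ1
  have hρtop : ρ ≠ ⊤ := (hρ2.trans_le le_top).ne
  set ρ' : NNReal := ρ.toNNReal with hρ'
  have hρ'lt : (ρ' : ℝ) < 1 := by
    have := hρ2
    rw [← ENNReal.coe_toNNReal hρtop] at this
    exact_mod_cast this
  have hbound : ∀ᶠ k : ℕ in atTop, (‖A ^ k‖₊ : ℝ) ≤ (ρ' : ℝ) ^ k := by
    filter_upwards [hev, eventually_ge_atTop 1] with k hk hk1
    have hkne : (k : ℝ) ≠ 0 := by positivity
    have h2 := ENNReal.rpow_le_rpow hk.le (by positivity : (0:ℝ) ≤ (k:ℝ))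
    rw [← ENNReal.rpow_mul, one_div, inv_mul_cancel₀ hkne, ENNReal.rpow_one,
      ← ENNReal.coe_toNNReal hρtop,
      ← ENNReal.coe_rpow_of_nonneg _ (by positivity : (0:ℝ) ≤ (k:ℝ)),
      ENNReal.coe_le_coe] at h2
    rw [NNReal.rpow_natCast] at h2
    calc (‖A ^ k‖₊ : ℝ) ≤ ((ρ' ^ k : NNReal) : ℝ) := by exact_mod_cast h2
      _ = (ρ' : ℝ) ^ k := by push_cast; ring
  have hnorm : Tendsto (fun k => ‖(A ^ k) i j‖) atTop (𝓝 0) := by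
    have hgeo : Tendsto (fun k => ((ρ' : ℝ)) ^ k) atTop (𝓝 0) :=
      tendsto_pow_atTop_nhds_zero_of_lt_one (by positivity) hρ'lt
    apply squeeze_zero' (Eventually.of_forall fun k => norm_nonneg _) _ hgeo
    filter_upwards [hbound] with k hk
    exact le_trans (by exact_mod_cast entry_nnnorm_le (A ^ k) i j) hk
  simpa using tendsto_zero_iff_norm_tendsto_zero.2 hnorm

end Analysis

/-- Two P consensus estimators connected in series
(`p k = w k - ξ k`, `ξ (k+1) = ξ k + L *ᵥ p k`, followed by `y k = p k - x k`,
`x (k+1) = x k + L *ᵥ y k`), initialized with `𝟙ᵀξ⁰ = 0` and `𝟙ᵀx⁰ = 0`, where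
the Laplacian satisfies `L𝟙 = 0`, `𝟙ᵀL = 0`, the eigenvalue `1` of `I - L` has
algebraic multiplicity one, and every other complex eigenvalue of `I - L` has
modulus strictly less than `1`: for an affine input `w k = a + k • b`, the
cascaded (second-order) estimator asymptotically tracks the average, i.e.
`y k - ((1/n) ∑ i, w k i) 𝟙 → 0`. -/
theorem cascaded_P_estimators_track_ramp_average
    (n : ℕ) (L : Matrix (Fin n) (Fin n) ℝ)
    (hrow : L *ᵥ (fun _ => (1 : ℝ)) = 0)
    (hcol : (fun _ => (1 : ℝ)) ᵥ* L = 0)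
    (hmult : ((((1 : Matrix (Fin n) (Fin n) ℝ) - L).map
        (algebraMap ℝ ℂ)).charpoly).rootMultiplicity 1 = 1)
    (hspec : ∀ μ ∈ spectrum ℂ (((1 : Matrix (Fin n) (Fin n) ℝ) - L).map
        (algebraMap ℝ ℂ)), μ ≠ 1 → ‖μ‖ < 1)
    (a b : Fin n → ℝ) (w : ℕ → Fin n → ℝ)
    (hw : ∀ k, w k = a + (k : ℝ) • b)
    (ξ p x y : ℕ → Fin n → ℝ)
    (hp : ∀ k, p k = w k - ξ k)
    (hξ : ∀ k, ξ (k + 1) = ξ k + L *ᵥ p k)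
    (hy : ∀ k, y k = p k - x k)
    (hx : ∀ k, x (k + 1) = x k + L *ᵥ y k)
    (hξ0 : ∑ i, ξ 0 i = 0)
    (hx0 : ∑ i, x 0 i = 0) :
    Tendsto (fun k => y k - ((1 / (n : ℝ)) * ∑ i, w k i) • (fun _ => (1 : ℝ) : Fin n → ℝ))
      atTop (𝓝 0) := by
  classical
  rcases Nat.eq_zero_or_pos n with hn0 | hn
  · subst hn0
    have : (fun k => y k - ((1 / ((0:ℕ) : ℝ)) * ∑ i, w k i) • (fun _ => (1 : ℝ) : Fin 0 → ℝ))
        = fun _ => 0 := funext fun k => Subsingleton.elim _ _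
    rw [this]
    exact tendsto_const_nhds
  have hnR : (n : ℝ) ≠ 0 := Nat.cast_ne_zero.mpr hn.ne'
  haveI : Nonempty (Fin n) := ⟨⟨0, hn⟩⟩
  set one : Fin n → ℝ := fun _ => (1:ℝ) with hone
  -- sum helpers
  have sumL : ∀ u : Fin n → ℝ, ∑ i, (L *ᵥ u) i = 0 := by
    intro u
    have : ∑ i, (L *ᵥ u) i = one ⬝ᵥ (L *ᵥ u) := by
      simp [dotProduct, hone]
    rw [this, Matrix.dotProduct_mulVec, hcol]
    simp [dotProduct]
  -- complexification helper
  have mapMV : ∀ (A : Matrix (Fin n) (Fin n) ℝ) (u : Fin n → ℝ),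
      (A.map (algebraMap ℝ ℂ)) *ᵥ (fun i => (u i : ℂ)) = fun i => (((A *ᵥ u) i : ℝ) : ℂ) := by
    intro A u
    funext i
    simp only [Matrix.mulVec, dotProduct, Matrix.map_apply]
    push_cast
    rfl
  set Mc : Matrix (Fin n) (Fin n) ℂ :=
    ((1 : Matrix (Fin n) (Fin n) ℝ) - L).map (algebraMap ℝ ℂ) with hMc
  have hMone : ((1 : Matrix (Fin n) (Fin n) ℝ) - L) *ᵥ one = one := by
    rw [Matrix.sub_mulVec, Matrix.one_mulVec, hone, hrow, sub_zero]
  -- the kernel lemma over ℂ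
  have kerC : ∀ v : Fin n → ℂ, Mc *ᵥ v = v → ∑ i, v i = 0 → v = 0 := by
    intro v hv hvs
    by_contra hv0
    have honeC : Mc *ᵥ (fun _ => (1:ℂ)) = fun _ => (1:ℂ) := by
      have h := mapMV ((1 : Matrix (Fin n) (Fin n) ℝ) - L) one
      rw [hMone] at h
      have he : (fun i : Fin n => ((one i : ℝ) : ℂ)) = fun _ => (1:ℂ) := by
        funext i; simp [hone]
      rw [he] at h
      exact h
    have hind : LinearIndependent ℂ ![(fun _ => (1:ℂ) : Fin n → ℂ), v] := by
      rw [LinearIndependent.pair_iff]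
      intro s t hst
      have hsum : (n : ℂ) * s = 0 := by
        have h0 := congrArg (fun u => ∑ i, u i) hst
        simp only [Pi.add_apply, Pi.smul_apply, smul_eq_mul, Finset.sum_add_distrib,
          ← Finset.mul_sum, hvs, mul_zero, add_zero, Pi.zero_apply, Finset.sum_const,
          Finset.card_univ, Fintype.card_fin, mul_one, nsmul_eq_mul,
          Finset.sum_const_zero] at h0
        exact h0
      have hs : s = 0 := by
        have hnC : ((n:ℕ) : ℂ) ≠ 0 := Nat.cast_ne_zero.mpr hn.ne'
        rcases mul_eq_zero.mp hsum with h | h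
        · exact absurd h hnC
        · exact h
      subst hs
      refine ⟨rfl, ?_⟩
      simp only [zero_smul, zero_add] at hst
      by_contra ht
      exact hv0 (by simpa [ht] using congrArg (fun u => t⁻¹ • u) hst)
    have hdvd := sq_dvd_charpoly Mc (fun _ => (1:ℂ)) v honeC hv hind
    have hne : Mc.charpoly ≠ 0 := (Matrix.charpoly_monic Mc).ne_zero
    have h2 : 2 ≤ Mc.charpoly.rootMultiplicity 1 :=
      (Polynomial.le_rootMultiplicity_iff hne).mpr hdvd
    rw [hmult] at h2
    omega
  -- kernel lemma over ℝ
  have kerR : ∀ u : Fin n → ℝ, L *ᵥ u = 0 → ∑ i, u i = 0 → u = 0 := by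
    intro u hLu hsu
    have h1 : Mc *ᵥ (fun i => (u i : ℂ)) = fun i => (u i : ℂ) := by
      rw [hMc, mapMV]
      rw [Matrix.sub_mulVec, Matrix.one_mulVec, hLu, sub_zero]
    have h2 : ∑ i, ((u i : ℂ)) = 0 := by
      rw [← Complex.ofReal_sum, hsu, Complex.ofReal_zero]
    have := kerC _ h1 h2
    funext i
    have h3 := congrFun this i
    simpa using h3
  -- surjectivity of L on the zero-sum subspace
  have solve : ∀ t : Fin n → ℝ, ∑ i, t i = 0 → ∃ u, L *ᵥ u = t ∧ ∑ i, u i = 0 := by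
    intro t ht
    set K : Matrix (Fin n) (Fin n) ℝ := Matrix.of (fun _ _ => (1:ℝ)) with hK
    have hKu : ∀ u : Fin n → ℝ, K *ᵥ u = (∑ i, u i) • one := by
      intro u
      funext i
      simp [hK, Matrix.mulVec, dotProduct, hone]
    have hinj : Function.Injective ((L + K).mulVecLin) := by
      rw [← LinearMap.ker_eq_bot]
      rw [LinearMap.ker_eq_bot']
      intro u hu
      simp only [Matrix.mulVecLin_apply, Matrix.add_mulVec, hKu] at hu
      have hsu : ∑ i, u i = 0 := by
        have := congrArg (fun z => ∑ i, z i) hu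
        simp only [Pi.add_apply, Pi.smul_apply, Finset.sum_add_distrib, smul_eq_mul,
          hone, mul_one, Finset.sum_const, Finset.card_univ, Fintype.card_fin,
          nsmul_eq_mul, Pi.zero_apply] at this
        rw [sumL] at this
        simp only [zero_add, Finset.sum_const, Pi.zero_apply, Finset.sum_const_zero] at this
        have : (n:ℝ) * ∑ i, u i = 0 := by linarith [this]
        exact (mul_eq_zero.mp this).resolve_left hnR
      rw [hsu, zero_smul, add_zero] at hu
      exact kerR u hu hsu
    have hsurj : Function.Surjective ((L + K).mulVecLin) :=
      (LinearMap.injective_iff_surjective).mp hinj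
    obtain ⟨u, hu⟩ := hsurj t
    simp only [Matrix.mulVecLin_apply, Matrix.add_mulVec, hKu] at hu
    have hsu : ∑ i, u i = 0 := by
      have := congrArg (fun z => ∑ i, z i) hu
      simp only [Pi.add_apply, Pi.smul_apply, Finset.sum_add_distrib, smul_eq_mul,
        hone, mul_one, Finset.sum_const, Finset.card_univ, Fintype.card_fin,
        nsmul_eq_mul] at this
      rw [sumL, ht] at this
      have : (n:ℝ) * ∑ i, u i = 0 := by linarith [this]
      exact (mul_eq_zero.mp this).resolve_left hnR
    rw [hsu, zero_smul, add_zero] at hu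
    exact ⟨u, hu, hsu⟩
  -- centered input components
  set sa : ℝ := (1/(n:ℝ)) * ∑ i, a i with hsa
  set sb : ℝ := (1/(n:ℝ)) * ∑ i, b i with hsb
  set abar : Fin n → ℝ := a - sa • one with habar
  set bbar : Fin n → ℝ := b - sb • one with hbbar
  have hsabar : ∑ i, abar i = 0 := by
    rw [habar]
    simp only [Pi.sub_apply, Pi.smul_apply, smul_eq_mul, hone, mul_one]
    rw [Finset.sum_sub_distrib, Finset.sum_const, Finset.card_univ, Fintype.card_fin,
      nsmul_eq_mul, hsa]
    field_simp
    ring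
  have hsbbar : ∑ i, bbar i = 0 := by
    rw [hbbar]
    simp only [Pi.sub_apply, Pi.smul_apply, smul_eq_mul, hone, mul_one]
    rw [Finset.sum_sub_distrib, Finset.sum_const, Finset.card_univ, Fintype.card_fin,
      nsmul_eq_mul, hsb]
    field_simp
    ring
  have hLbbar : L *ᵥ bbar = L *ᵥ b := by
    rw [hbbar, Matrix.mulVec_sub, Matrix.mulVec_smul, hrow]
    simp
  -- particular solution offsets
  obtain ⟨c2, hc2, hc2s⟩ := solve bbar hsbbar
  obtain ⟨c1, hc1, hc1s⟩ := solve (L *ᵥ a - bbar)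
    (by simp only [Pi.sub_apply]; rw [Finset.sum_sub_distrib]; rw [sumL, hsbbar]; ring)
  have hc12 : c1 + c2 = abar := by
    have h0 : L *ᵥ (c1 + c2 - abar) = 0 := by
      have hLabar : L *ᵥ abar = L *ᵥ a := by
        rw [habar, Matrix.mulVec_sub, Matrix.mulVec_smul, hrow]
        simp
      rw [Matrix.mulVec_sub, Matrix.mulVec_add, hc1, hc2, hLabar]
      abel
    have hs0 : ∑ i, (c1 + c2 - abar) i = 0 := by
      simp only [Pi.sub_apply, Pi.add_apply]
      rw [Finset.sum_sub_distrib, Finset.sum_add_distrib, hc1s, hc2s, hsabar]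
      ring
    have := kerR _ h0 hs0
    exact sub_eq_zero.mp this
  -- error coordinates
  set e1 : ℕ → Fin n → ℝ := fun k => ξ k - c1 - (k:ℝ) • bbar with he1
  set e2 : ℕ → Fin n → ℝ := fun k => x k - c2 with he2
  -- the stable matrix
  set Jm : Matrix (Fin n) (Fin n) ℝ := Matrix.of (fun _ _ => 1/(n:ℝ)) with hJm
  set N : Matrix (Fin n) (Fin n) ℝ := (1 - L) - Jm with hNdef
  have hJzero : ∀ u : Fin n → ℝ, ∑ i, u i = 0 → Jm *ᵥ u = 0 := by
    intro u hu
    funext i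
    simp [hJm, Matrix.mulVec, dotProduct, ← Finset.mul_sum, hu]
  have hNcol : ∀ j, ∑ i, N i j = 0 := by
    intro j
    have h1 : ∑ i, (1 : Matrix (Fin n) (Fin n) ℝ) i j = 1 := by
      simp [Matrix.one_apply]
    have h2 : ∑ i, L i j = 0 := by
      have h := congrFun hcol j
      simpa [Matrix.vecMul, dotProduct, hone] using h
    rw [hNdef]
    simp only [Matrix.sub_apply, hJm, Matrix.of_apply]
    rw [Finset.sum_sub_distrib, Finset.sum_sub_distrib, h1, h2, Finset.sum_const,
      Finset.card_univ, Fintype.card_fin, nsmul_eq_mul]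
    field_simp
    ring
  have hNsum : ∀ u : Fin n → ℝ, ∑ i, (N *ᵥ u) i = 0 := by
    intro u
    have : ∑ i, (N *ᵥ u) i = ∑ j, (∑ i, N i j) * u j := by
      simp only [Matrix.mulVec, dotProduct]
      rw [Finset.sum_comm]
      simp [Finset.sum_mul]
    rw [this]
    simp [hNcol]
  -- error recursions
  have rec1 : ∀ k, ∑ i, e1 k i = 0 → e1 (k+1) = N *ᵥ e1 k := by
    intro k hs
    have hJ0 : Jm *ᵥ e1 k = 0 := hJzero _ hs
    rw [hNdef, Matrix.sub_mulVec, hJ0, sub_zero, Matrix.sub_mulVec, Matrix.one_mulVec]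
    simp only [he1, hξ k, hp k, hw k]
    push_cast
    simp only [Matrix.mulVec_sub, Matrix.mulVec_add, Matrix.mulVec_smul]
    rw [hc1, hLbbar]
    module
  have rec2 : ∀ k, ∑ i, e1 k i = 0 → ∑ i, e2 k i = 0 →
      e2 (k+1) = N *ᵥ e2 k - L *ᵥ e1 k := by
    intro k hs1 hs2
    have hJ0 : Jm *ᵥ e2 k = 0 := hJzero _ hs2
    rw [hNdef, Matrix.sub_mulVec, hJ0, sub_zero, Matrix.sub_mulVec, Matrix.one_mulVec]
    simp only [he1, he2, hx k, hy k, hp k, hw k]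
    simp only [Matrix.mulVec_sub, Matrix.mulVec_add, Matrix.mulVec_smul]
    rw [hc1, hc2, hLbbar]
    module
  -- sums stay zero
  have hsums : ∀ k, ∑ i, e1 k i = 0 ∧ ∑ i, e2 k i = 0 := by
    intro k
    induction k with
    | zero =>
      constructor
      · simp only [he1]
        push_cast
        simp only [Pi.sub_apply, Pi.smul_apply, smul_eq_mul]
        rw [Finset.sum_sub_distrib, Finset.sum_sub_distrib, hξ0, hc1s]
        simp [← Finset.mul_sum, hsbbar]
      · simp only [he2, Pi.sub_apply]
        rw [Finset.sum_sub_distrib, hx0, hc2s]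
        ring
    | succ k ih =>
      constructor
      · rw [rec1 k ih.1]
        exact hNsum _
      · rw [rec2 k ih.1 ih.2]
        simp only [Pi.sub_apply]
        rw [Finset.sum_sub_distrib, hNsum, sumL]
        ring
  -- block matrix dynamics
  set B : Matrix (Fin n ⊕ Fin n) (Fin n ⊕ Fin n) ℝ := Matrix.fromBlocks N 0 (-L) N with hB
  have hE : ∀ k, Sum.elim (e1 k) (e2 k) = (B ^ k) *ᵥ Sum.elim (e1 0) (e2 0) := by
    intro k
    induction k with
    | zero => rw [pow_zero, Matrix.one_mulVec]
    | succ k ih =>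
      have hstep : Sum.elim (e1 (k+1)) (e2 (k+1)) = B *ᵥ Sum.elim (e1 k) (e2 k) := by
        rw [hB, Matrix.fromBlocks_mulVec]
        simp only [Sum.elim_comp_inl, Sum.elim_comp_inr, Matrix.zero_mulVec,
          Matrix.neg_mulVec, add_zero]
        rw [rec1 k (hsums k).1, rec2 k (hsums k).1 (hsums k).2]
        abel_nf
      rw [hstep, ih, Matrix.mulVec_mulVec, ← pow_succ']
  -- spectrum of the complexified block matrix
  set Nc : Matrix (Fin n) (Fin n) ℂ := N.map (algebraMap ℝ ℂ) with hNc
  set Jc : Matrix (Fin n) (Fin n) ℂ := Jm.map (algebraMap ℝ ℂ) with hJc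
  have hNcMc : Nc = Mc - Jc := by
    rw [hNc, hMc, hJc, hNdef]
    funext i j
    simp [Matrix.map_apply, Matrix.sub_apply]
  have hNeig : ∀ (μ : ℂ) (v : Fin n → ℂ), v ≠ 0 → Nc *ᵥ v = μ • v → ‖μ‖ < 1 := by
    intro μ v hv heig
    have hNcolC : ∀ j, ∑ i, Nc i j = 0 := by
      intro j
      rw [hNc]
      simp only [Matrix.map_apply]
      rw [← map_sum, hNcol j, map_zero]
    have hsumNv : ∑ i, (Nc *ᵥ v) i = 0 := by
      have : ∑ i, (Nc *ᵥ v) i = ∑ j, (∑ i, Nc i j) * v j := by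
        simp only [Matrix.mulVec, dotProduct]
        rw [Finset.sum_comm]
        simp [Finset.sum_mul]
      rw [this]
      simp [hNcolC]
    rw [heig] at hsumNv
    simp only [Pi.smul_apply, smul_eq_mul, ← Finset.mul_sum] at hsumNv
    by_cases hμ0 : μ = 0
    · simp [hμ0]
    have hsv : ∑ i, v i = 0 := by
      rcases mul_eq_zero.mp hsumNv with h | h
      · exact absurd h hμ0
      · exact h
    have hJv : Jc *ᵥ v = 0 := by
      funext i
      simp only [hJc, Matrix.mulVec, dotProduct, Matrix.map_apply, hJm,
        Matrix.of_apply, Pi.zero_apply]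
      rw [← Finset.mul_sum, hsv, mul_zero]
    have hMv : Mc *ᵥ v = μ • v := by
      have : Mc *ᵥ v = Nc *ᵥ v + Jc *ᵥ v := by
        rw [hNcMc, Matrix.sub_mulVec]
        abel
      rw [this, heig, hJv, add_zero]
    by_cases hμ1 : μ = 1
    · exfalso
      rw [hμ1, one_smul] at hMv
      exact hv (kerC v hMv hsv)
    · exact hspec μ (mem_spectrum_of_eigen Mc hv hMv) hμ1
  set Bc : Matrix (Fin n ⊕ Fin n) (Fin n ⊕ Fin n) ℂ := B.map (algebraMap ℝ ℂ) with hBc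
  have hBcBlocks : Bc = Matrix.fromBlocks Nc 0 ((-L).map (algebraMap ℝ ℂ)) Nc := by
    rw [hBc, hB, Matrix.fromBlocks_map, Matrix.map_zero _ (map_zero _)]
  have hBspec : ∀ μ ∈ spectrum ℂ Bc, ‖μ‖ < 1 := by
    intro μ hμ
    obtain ⟨v, hv, heig⟩ := exists_eigen_of_mem_spectrum hμ
    have hv' : v = Sum.elim (v ∘ Sum.inl) (v ∘ Sum.inr) := by
      funext s; cases s <;> rfl
    rw [hBcBlocks, hv', Matrix.fromBlocks_mulVec] at heig
    simp only [Sum.elim_comp_inl, Sum.elim_comp_inr, Matrix.zero_mulVec, add_zero] at heig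
    have h1 : Nc *ᵥ (v ∘ Sum.inl) = μ • (v ∘ Sum.inl) := by
      funext i
      have := congrFun heig (Sum.inl i)
      simpa using this
    have h2 : ((-L).map (algebraMap ℝ ℂ)) *ᵥ (v ∘ Sum.inl) + Nc *ᵥ (v ∘ Sum.inr)
        = μ • (v ∘ Sum.inr) := by
      funext i
      have := congrFun heig (Sum.inr i)
      simpa using this
    by_cases hv1 : (v ∘ Sum.inl) = 0
    · have hv2 : (v ∘ Sum.inr) ≠ 0 := by
        intro hv2
        apply hv
        funext s
        cases s with
        | inl i => exact congrFun hv1 i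
        | inr i => exact congrFun hv2 i
      rw [hv1, Matrix.mulVec_zero, zero_add] at h2
      exact hNeig μ _ hv2 h2
    · exact hNeig μ _ hv1 h1
  -- entries of powers of B tend to zero
  haveI : Nonempty (Fin n ⊕ Fin n) := ⟨Sum.inl ⟨0, hn⟩⟩
  have hpowR : ∀ i2 j2 : Fin n ⊕ Fin n, Tendsto (fun k => (B ^ k) i2 j2) atTop (𝓝 0) := by
    intro i2 j2
    have hcplx := pow_entry_tendsto_zero Bc hBspec i2 j2
    have hident : ∀ k, (Bc ^ k) i2 j2 = (((B ^ k) i2 j2 : ℝ) : ℂ) := by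
      intro k
      have hmap : Bc ^ k = (B ^ k).map (algebraMap ℝ ℂ) := by
        rw [hBc, ← RingHom.mapMatrix_apply, ← map_pow, RingHom.mapMatrix_apply]
      rw [hmap]
      rfl
    rw [tendsto_zero_iff_norm_tendsto_zero]
    have h2 := tendsto_zero_iff_norm_tendsto_zero.mp hcplx
    apply h2.congr
    intro k
    rw [hident]
    exact Complex.norm_real _
  -- the error coordinates tend to zero
  have htend1 : ∀ i, Tendsto (fun k => e1 k i) atTop (𝓝 0) := by
    intro i
    have hid : ∀ k, e1 k i = ∑ jj, (B ^ k) (Sum.inl i) jj * (Sum.elim (e1 0) (e2 0)) jj := by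
      intro k
      have := congrFun (hE k) (Sum.inl i)
      simpa [Matrix.mulVec, dotProduct] using this
    have : Tendsto (fun k => ∑ jj, (B ^ k) (Sum.inl i) jj * (Sum.elim (e1 0) (e2 0)) jj)
        atTop (𝓝 0) := by
      have := tendsto_finset_sum (Finset.univ : Finset (Fin n ⊕ Fin n))
        (fun jj _ => (hpowR (Sum.inl i) jj).mul_const ((Sum.elim (e1 0) (e2 0)) jj))
      simpa using this
    exact this.congr (fun k => (hid k).symm)
  have htend2 : ∀ i, Tendsto (fun k => e2 k i) atTop (𝓝 0) := by
    intro i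
    have hid : ∀ k, e2 k i = ∑ jj, (B ^ k) (Sum.inr i) jj * (Sum.elim (e1 0) (e2 0)) jj := by
      intro k
      have := congrFun (hE k) (Sum.inr i)
      simpa [Matrix.mulVec, dotProduct] using this
    have : Tendsto (fun k => ∑ jj, (B ^ k) (Sum.inr i) jj * (Sum.elim (e1 0) (e2 0)) jj)
        atTop (𝓝 0) := by
      have := tendsto_finset_sum (Finset.univ : Finset (Fin n ⊕ Fin n))
        (fun jj _ => (hpowR (Sum.inr i) jj).mul_const ((Sum.elim (e1 0) (e2 0)) jj))
      simpa using this
    exact this.congr (fun k => (hid k).symm)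
  -- final identification
  have hwsum : ∀ k : ℕ, (1 / (n:ℝ)) * ∑ i, w k i = sa + (k:ℝ) * sb := by
    intro k
    rw [hw k]
    simp only [Pi.add_apply, Pi.smul_apply, smul_eq_mul]
    rw [Finset.sum_add_distrib, ← Finset.mul_sum, hsa, hsb]
    ring
  have hident : (fun k => y k - ((1 / (n : ℝ)) * ∑ i, w k i) • one)
      = fun k => -(e1 k + e2 k) := by
    funext k
    rw [hy k, hp k, hwsum k, hw k]
    have hkey : -(e1 k + e2 k) = (c1 + c2) + (k:ℝ) • bbar - ξ k - x k := by
      simp only [he1, he2]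
      abel
    rw [hkey, hc12, habar, hbbar]
    module
  rw [hident]
  rw [tendsto_pi_nhds]
  intro i
  have := ((htend1 i).add (htend2 i)).neg
  simp only [Pi.neg_apply, Pi.add_apply]
  simpa using this
end
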